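/- Fix 0 < f_L < f_H, S_L > S_H > 0, and N₀ > 0. Define the water-filling rate function R̂(λ) = f_L·max(0, log₂((S_L + N₀)/λ)) + (f_H − f_L)·max(0, log₂((S_H + N₀)/λ)) for λ > 0, and the critical rate R_crit = f_L·log₂((S_L + N₀)/(S_H + N₀)). If 0 < R ≤ R_crit, then λ* = (S_L + N₀)·2^{−R/f_L} satisfies S_H + N₀ ≤ λ* < S_L + N₀, max(0, log₂((S_H + N₀)/λ*)) = 0, and R̂(λ*) = R. -/

import Mathlib

open Real

/-- **Closed-form water level, intermediate-rate regime.** If `0 < R ≤ R_crit` then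
`λ* = (S_L + N₀) 2^{−R/f_L}` satisfies `S_H + N₀ ≤ λ* < S_L + N₀`, the high-band term
of the water-filling rate vanishes, and `R̂(λ*) = R`. -/
theorem waterfilling_level_intermediate_rate
    (fL fH SL SH N0 : ℝ)
    (hfL : 0 < fL) (hfLH : fL < fH)
    (hSH : 0 < SH) (hSLH : SH < SL) (hN0 : 0 < N0)
    (Rhat : ℝ → ℝ)
    (hRhat : ∀ lam : ℝ, 0 < lam →
      Rhat lam = fL * max 0 (Real.logb 2 ((SL + N0) / lam))
        + (fH - fL) * max 0 (Real.logb 2 ((SH + N0) / lam)))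
    (Rcrit : ℝ) (hRcrit : Rcrit = fL * Real.logb 2 ((SL + N0) / (SH + N0)))
    (R : ℝ) (hR0 : 0 < R) (hR : R ≤ Rcrit)
    (lamStar : ℝ) (hlamStar : lamStar = (SL + N0) * (2 : ℝ) ^ (-(R / fL))) :
    SH + N0 ≤ lamStar ∧ lamStar < SL + N0 ∧
    max 0 (Real.logb 2 ((SH + N0) / lamStar)) = 0 ∧
    Rhat lamStar = R := by
  have hA : 0 < SL + N0 := by linarith
  have hB : 0 < SH + N0 := by linarith
  have hb1 : (1:ℝ) < 2 := one_lt_two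
  have hpos : (0:ℝ) < (2:ℝ) ^ (-(R / fL)) := Real.rpow_pos_of_pos two_pos _
  have hlam_pos : 0 < lamStar := by rw [hlamStar]; positivity
  have hRfL : R / fL ≤ Real.logb 2 ((SL + N0) / (SH + N0)) := by
    rw [div_le_iff₀ hfL]
    rw [hRcrit] at hR
    linarith [hR]
  have hlog : Real.logb 2 ((SH + N0) / (SL + N0)) ≤ -(R / fL) := by
    have heq : Real.logb 2 ((SH + N0) / (SL + N0))
        = - Real.logb 2 ((SL + N0) / (SH + N0)) := by
      rw [← Real.logb_inv]
      congr 1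
      field_simp
    rw [heq]
    linarith
  have key : (SH + N0) / (SL + N0) ≤ (2:ℝ) ^ (-(R / fL)) := by
    calc (SH + N0) / (SL + N0)
        = (2:ℝ) ^ (Real.logb 2 ((SH + N0) / (SL + N0))) :=
          (Real.rpow_logb two_pos (by norm_num) (div_pos hB hA)).symm
      _ ≤ (2:ℝ) ^ (-(R / fL)) := Real.rpow_le_rpow_of_exponent_le hb1.le hlog
  have h1 : SH + N0 ≤ lamStar := by
    rw [div_le_iff₀ hA] at key
    rw [hlamStar]
    nlinarith [key]
  have h2 : lamStar < SL + N0 := by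
    have hlt1 : (2:ℝ) ^ (-(R / fL)) < 1 :=
      Real.rpow_lt_one_of_one_lt_of_neg hb1 (by simp [div_pos hR0 hfL])
    rw [hlamStar]
    nlinarith [hlt1]
  have h3 : max 0 (Real.logb 2 ((SH + N0) / lamStar)) = 0 := by
    apply max_eq_left
    apply Real.logb_nonpos hb1 (by positivity)
    rw [div_le_one hlam_pos]
    exact h1
  refine ⟨h1, h2, h3, ?_⟩
  rw [hRhat lamStar hlam_pos, h3]
  have hAl : (SL + N0) / lamStar = (2:ℝ) ^ (R / fL) := by
    rw [hlamStar, Real.rpow_neg two_pos.le]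
    field_simp
  rw [hAl, Real.logb_rpow two_pos (by norm_num)]
  rw [max_eq_right (by positivity)]
  field_simp
  norm_num
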